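/- For classical parking functions (m = n), the statistic lel(π) (number of entries equal to the first entry) and the statistic ones(π) (number of entries equal to 1) are equidistributed over PF(n,n): for every k, #{π ∈ PF(n,n) : lel(π) = k} = #{π ∈ PF(n,n) : ones(π) = k}. -/

import Mathlib

/-- The finite set of parking functions `PF(m,n)`, encoded as functions
`Fin m → Fin n`, where the preferred spot of car `k` is `(π k : ℕ) + 1 ∈ {1,…,n}`. -/
def pf (m n : ℕ) : Finset (Fin m → Fin n) :=
  Finset.univ.filter (fun π =>
    ∀ i, i ≤ n → m + i ≤ (Finset.univ.filter (fun k => (π k : ℕ) + 1 ≤ i)).card + n)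

open Finset

namespace PfAux
open Finset

theorem cycle_lemma (m k : ℕ) [NeZero m] (hk : 1 ≤ k) (hkm : k ≤ m) (a : ZMod m → ℕ)
    (ha : ∑ v, a v = m - k) :
    (Finset.univ.filter (fun c : ZMod m => ∀ t < m,
      (t : ℤ) + 1 - k ≤ ∑ j ∈ Finset.range t, (a ((j : ZMod m) + c) : ℤ))).card = k := by
  have hm : 0 < m := Nat.pos_of_ne_zero (NeZero.ne m)
  set A : ℕ → ℤ := fun j => (a ((j : ZMod m)) : ℤ) with hA
  have hA0 : ∀ j, 0 ≤ A j := fun j => Int.natCast_nonneg _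
  set f : ℕ → ℤ := fun t => (∑ j ∈ Finset.range t, A j) - t with hf
  have hf0 : f 0 = 0 := by simp [hf]
  have hstep : ∀ t, f (t + 1) = f t + A t - 1 := by
    intro t
    simp [hf, Finset.sum_range_succ]
    ring
  have hdown : ∀ t, f t - 1 ≤ f (t + 1) := by
    intro t; have := hA0 t; rw [hstep]; omega
  -- sum of A over a full cycle
  have hcycle : ∀ t : ℕ, ∑ j ∈ Finset.range m, A (t + j) = (m : ℤ) - k := by
    intro t
    have : ∑ j ∈ Finset.range m, A (t + j) = ((∑ v : ZMod m, a v : ℕ) : ℤ) := by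
      push_cast
      refine Finset.sum_nbij' (i := fun j => ((t + j : ℕ) : ZMod m))
        (j := fun v => (v - (t : ZMod m)).val) ?_ ?_ ?_ ?_ ?_
      · intro j hj; exact Finset.mem_univ _
      · intro v hv; exact Finset.mem_range.2 (ZMod.val_lt _)
      · intro j hj
        push_cast
        rw [add_sub_cancel_left]
        exact ZMod.val_cast_of_lt (Finset.mem_range.1 hj)
      · intro v hv
        push_cast
        rw [ZMod.natCast_val, ZMod.cast_id]
        ring
      · intro j hj
        simp only [A]
    rw [this, ha]
    omega
  have hperiod : ∀ t, f (t + m) = f t - k := by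
    intro t
    have h1 : ∑ j ∈ Finset.range (t + m), A j
        = ∑ j ∈ Finset.range t, A j + ∑ j ∈ Finset.range m, A (t + j) := by
      rw [Finset.sum_range_add]
    simp only [hf]
    rw [h1, hcycle t]
    push_cast
    ring
  -- f at multiples of m
  have hmul : ∀ s : ℕ, f (s * m) = -(s * k : ℤ) := by
    intro s; induction s with
    | zero => simpa using hf0
    | succ s ih =>
      have h1 : (s + 1) * m = s * m + m := by ring
      rw [h1, hperiod, ih]; push_cast; ring
  have hit : ∀ v : ℤ, ∃ t : ℕ, f t ≤ v := by
    intro v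
    rcases le_or_gt 0 v with h | h
    · exact ⟨0, by rw [hf0]; exact h⟩
    · refine ⟨(-v).toNat * m, ?_⟩
      rw [hmul]
      have h2 : ((-v).toNat : ℤ) = -v := Int.toNat_of_nonneg (by omega)
      have h3 : ((-v).toNat : ℤ) * 1 ≤ ((-v).toNat : ℤ) * k := by
        apply mul_le_mul_of_nonneg_left _ (by positivity)
        exact_mod_cast hk
      push_cast at h3 ⊢
      omega
  set T : ℤ → ℕ := fun v => Nat.find (hit v) with hT
  have hT_le : ∀ v, f (T v) ≤ v := fun v => Nat.find_spec (hit v)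
  have hT_min : ∀ v, ∀ x, x < T v → v < f x := by
    intro v x hx
    have := Nat.find_min (hit v) hx
    omega
  have hT1 : ∀ v : ℤ, v ≤ 0 → f (T v) = v := by
    intro v hv
    rcases Nat.eq_zero_or_pos (T v) with h | h
    · have := hT_le v; rw [h, hf0] at this
      rw [h, hf0]; omega
    · obtain ⟨x, hx⟩ := Nat.exists_eq_add_of_lt h
      have hxlt : x < T v := by omega
      have h1 := hT_min v x hxlt
      have h2 := hdown x
      have h3 := hT_le v
      rw [hx] at h3 ⊢
      simp only [zero_add] at h3 ⊢
      omega
  have hne : (Finset.range m).Nonempty := ⟨0, Finset.mem_range.2 hm⟩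
  set μ : ℤ := (Finset.range m).inf' hne f with hμ
  have hμ_le : ∀ x, x < m → μ ≤ f x := fun x hx => Finset.inf'_le f (Finset.mem_range.2 hx)
  obtain ⟨xm, hxm, hfxm⟩ : ∃ x ∈ Finset.range m, f x = μ := by
    obtain ⟨x, hx, h⟩ := Finset.exists_mem_eq_inf' hne f
    exact ⟨x, hx, h.symm⟩
  rw [Finset.mem_range] at hxm
  have hμk : μ ≤ 1 - k := by
    have h1 : μ ≤ f (m - 1) := hμ_le _ (by omega)
    have h2 := hdown (m - 1)
    have h3 : m - 1 + 1 = 0 + m := by omega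
    rw [h3, hperiod, hf0] at h2
    omega
  set Good : ℕ → Prop := fun d => ∀ t < m, f d + 1 - k ≤ f (d + t) with hGood
  -- window trick
  have key1 : ∀ d, d < m → Good d → ∀ x, x < d → f d + 1 ≤ f x := by
    intro d hd hg x hx
    have ht : x + m - d < m := by omega
    have := hg (x + m - d) ht
    have he : d + (x + m - d) = x + m := by omega
    rw [he, hperiod] at this
    omega
  have key2 : ∀ d, d < m → Good d → f d ≤ μ + k - 1 := by
    intro d hd hg
    rcases le_or_gt d xm with h | h
    · have := hg (xm - d) (by omega)
      have he : d + (xm - d) = xm := by omega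
      rw [he, hfxm] at this
      omega
    · have := key1 d hd hg xm h
      rw [hfxm] at this
      omega
  have key3 : ∀ v : ℤ, μ ≤ v → v ≤ μ + k - 1 → T v < m ∧ Good (T v) ∧ f (T v) = v := by
    intro v h1 h2
    have hv0 : v ≤ 0 := by omega
    have hTv : f (T v) = v := hT1 v hv0
    have hTm : T v < m := by
      have : T v ≤ xm := Nat.find_min' (hit v) (by rw [hfxm]; omega)
      omega
    refine ⟨hTm, ?_, hTv⟩
    intro t ht
    by_contra hcon
    push_neg at hcon
    rw [hTv] at hcon
    rcases lt_or_ge (T v + t) m with h3 | h3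
    · have := hμ_le _ h3
      omega
    · have he : (T v + t - m) + m = T v + t := by omega
      have h4 : f (T v + t - m) = f (T v + t) + k := by
        have := hperiod (T v + t - m)
        rw [he] at this
        omega
      have h5 := hT_min v (T v + t - m) (by omega)
      omega
  -- bridge: the filter condition equals Good (c.val)
  have bridge : ∀ c : ZMod m, ∀ t : ℕ,
      ∑ j ∈ Finset.range t, (a ((j : ZMod m) + c) : ℤ) = f (c.val + t) - f c.val + t := by
    intro c t
    have h1 : ∀ j : ℕ, (a ((j : ZMod m) + c) : ℤ) = A (c.val + j) := by
      intro j
      simp only [A]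
      congr 1
      push_cast
      rw [ZMod.natCast_val, ZMod.cast_id]
      ring
    rw [Finset.sum_congr rfl (fun j _ => h1 j)]
    have h2 : ∑ j ∈ Finset.range (c.val + t), A j
        = ∑ j ∈ Finset.range c.val, A j + ∑ j ∈ Finset.range t, A (c.val + j) :=
      Finset.sum_range_add A c.val t
    simp only [hf]
    push_cast
    rw [h2]
    ring
  have hcond : ∀ c : ZMod m,
      (∀ t < m, (t : ℤ) + 1 - k ≤ ∑ j ∈ Finset.range t, (a ((j : ZMod m) + c) : ℤ))
        ↔ Good c.val := by
    intro c
    constructor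
    · intro h t ht
      have := h t ht
      rw [bridge c t] at this
      omega
    · intro h t ht
      rw [bridge c t]
      have := h t ht
      omega
  classical
  have stepA : (Finset.univ.filter (fun c : ZMod m => ∀ t < m,
      (t : ℤ) + 1 - k ≤ ∑ j ∈ Finset.range t, (a ((j : ZMod m) + c) : ℤ))).card
      = ((Finset.range m).filter Good).card := by
    apply Finset.card_bij (fun c _ => ZMod.val c)
    · intro c hc
      simp only [Finset.mem_filter, Finset.mem_range]
      refine ⟨ZMod.val_lt c, ?_⟩
      rw [Finset.mem_filter] at hc
      exact (hcond c).1 hc.2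
    · intro c₁ h₁ c₂ h₂ h
      exact ZMod.val_injective _ h
    · intro d hd
      rw [Finset.mem_filter, Finset.mem_range] at hd
      refine ⟨(d : ZMod m), ?_, ?_⟩
      · rw [Finset.mem_filter]
        refine ⟨Finset.mem_univ _, ?_⟩
        rw [hcond, ZMod.val_cast_of_lt hd.1]
        exact hd.2
      · rw [ZMod.val_cast_of_lt hd.1]
  have stepB : ((Finset.range m).filter Good).card = (Finset.Icc μ (μ + k - 1)).card := by
    apply Finset.card_bij (fun d _ => f d)
    · intro d hd
      rw [Finset.mem_filter, Finset.mem_range] at hd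
      rw [Finset.mem_Icc]
      exact ⟨hμ_le d hd.1, key2 d hd.1 hd.2⟩
    · intro d₁ h₁ d₂ h₂ h
      rw [Finset.mem_filter, Finset.mem_range] at h₁ h₂
      rcases lt_trichotomy d₁ d₂ with hlt | heq | hgt
      · have := key1 d₂ h₂.1 h₂.2 d₁ hlt
        omega
      · exact heq
      · have := key1 d₁ h₁.1 h₁.2 d₂ hgt
        omega
    · intro v hv
      rw [Finset.mem_Icc] at hv
      obtain ⟨h1, h2, h3⟩ := key3 v hv.1 hv.2
      exact ⟨T v, by rw [Finset.mem_filter, Finset.mem_range]; exact ⟨h1, h2⟩, h3⟩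
  have stepC : (Finset.Icc μ (μ + k - 1)).card = k := by
    rw [Int.card_Icc]
    have : μ + (k : ℤ) - 1 + 1 - μ = k := by ring
    rw [this]
    exact Int.toNat_natCast k
  rw [stepA, stepB, stepC]

lemma val_eq_cast_iff {N : ℕ} [NeZero N] (x : ZMod N) (t : ℕ) (ht : t < N) :
    x = (t : ZMod N) ↔ x.val = t := by
  constructor
  · rintro rfl; exact ZMod.val_cast_of_lt ht
  · intro h; rw [← h]; exact (ZMod.natCast_rightInverse x).symm

lemma card_val_lt {ι : Type*} [Fintype ι] [DecidableEq ι] {N : ℕ} [NeZero N]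
    (w : ι → ZMod N) (i : ℕ) (hi : i ≤ N) :
    (univ.filter fun j : ι => (w j).val < i).card
      = ∑ t ∈ range i, (univ.filter fun j : ι => w j = (t : ZMod N)).card := by
  rw [Finset.card_eq_sum_card_fiberwise (f := fun j => (w j).val) (t := range i)
    (fun x hx => mem_range.2 (mem_filter.1 hx).2)]
  apply Finset.sum_congr rfl
  intro t ht
  rw [mem_range] at ht
  congr 1
  ext j
  simp only [mem_filter, mem_univ, true_and]
  rw [val_eq_cast_iff _ t (lt_of_lt_of_le ht hi)]
  constructor
  · rintro ⟨h1, h2⟩; exact h2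
  · intro h; exact ⟨by omega, h⟩

/-- fiber counting: multiplicities sum to the size of the index type -/
lemma sum_mult {ι : Type*} [Fintype ι] [DecidableEq ι] {N : ℕ} [NeZero N] (w : ι → ZMod N) :
    ∑ v : ZMod N, (univ.filter fun j : ι => w j = v).card = Fintype.card ι := by
  rw [← Finset.card_univ,
    Finset.card_eq_sum_card_fiberwise (f := w) (t := univ) (fun x _ => mem_univ _)]

/-- count over negated variable -/
lemma card_filter_neg {N : ℕ} [NeZero N] (p : ZMod N → Prop) [DecidablePred p] :
    (univ.filter fun c : ZMod N => p (-c)).card = (univ.filter p).card := by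
  apply Finset.card_nbij (i := fun c => -c)
  · intro c hc; simp only [Finset.mem_coe, mem_filter, mem_univ, true_and] at *; exact hc
  · intro c₁ h₁ c₂ h₂ h; simpa using h
  · intro v hv
    simp only [Finset.coe_filter, Set.mem_image, Set.mem_setOf_eq] at *
    exact ⟨-v, by simpa using hv, by simp⟩

/-- key reindexing: summing over shifted functions -/
lemma sum_shift {ι G : Type*} [Fintype ι] [DecidableEq ι] [Fintype G] [AddCommGroup G]
    (c : G) (F : (ι → G) → ℕ) :
    ∑ w : ι → G, F (fun j => w j + c) = ∑ w : ι → G, F w := by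
  exact Fintype.sum_equiv (Equiv.piCongrRight fun _ => Equiv.addRight c) _ _ (fun w => rfl)

/-- generic double counting -/
lemma double_count {ι G : Type*} [Fintype ι] [DecidableEq ι] [Fintype G] [AddCommGroup G]
    [DecidableEq G] (Q : (ι → G) → Prop) [DecidablePred Q] :
    ∑ w : ι → G, (univ.filter fun c : G => Q (fun j => w j + c)).card
      = Fintype.card G * (univ.filter Q).card := by
  have h1 : ∀ w : ι → G, (univ.filter fun c : G => Q (fun j => w j + c)).card
      = ∑ c : G, if Q (fun j => w j + c) then 1 else 0 := by
    intro w; rw [Finset.card_filter]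
  simp only [h1]
  rw [Finset.sum_comm]
  have h2 : ∀ c : G, (∑ w : ι → G, if Q (fun j => w j + c) then 1 else 0)
      = (univ.filter Q).card := by
    intro c
    rw [sum_shift c (fun w => if Q w then 1 else 0), Finset.card_filter]
  rw [Finset.sum_congr rfl (fun c _ => h2 c), Finset.sum_const, card_univ, smul_eq_mul]


/-- parking condition over `ZMod (n+1)` -/
def PFZ (n : ℕ) (w : Fin n → ZMod (n+1)) : Prop :=
  ∀ i ≤ n, i ≤ (univ.filter fun j => (w j).val < i).card

instance (n : ℕ) (w : Fin n → ZMod (n+1)) : Decidable (PFZ n w) :=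
  Nat.decidableBallLE n _

lemma pollak (n : ℕ) (hn : 1 ≤ n) (u : Fin n → ZMod (n+1)) :
    (univ.filter fun c : ZMod (n+1) => PFZ n (fun j => u j + c)).card = 1 := by
  set a : ZMod (n+1) → ℕ := fun v => (univ.filter fun j => u j = v).card with haa
  have ha : ∑ v, a v = (n+1) - 1 := by
    rw [sum_mult]; simp
  have hcount : ∀ (c : ZMod (n+1)) (i : ℕ), i ≤ n+1 →
      (univ.filter fun j => (u j + -c).val < i).card
        = ∑ t ∈ range i, a ((t : ZMod (n+1)) + c) := by
    intro c i hi
    rw [card_val_lt (fun j => u j + -c) i hi]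
    apply Finset.sum_congr rfl
    intro t ht
    simp only [haa]
    congr 1
    ext j
    simp only [mem_filter, mem_univ, true_and]
    rw [← sub_eq_add_neg, sub_eq_iff_eq_add]
  have key : ∀ c : ZMod (n+1), PFZ n (fun j => u j + -c) ↔ (∀ t < n+1,
      (t : ℤ) + 1 - ((1:ℕ):ℤ) ≤ ∑ j ∈ range t, (a ((j : ZMod (n+1)) + c) : ℤ)) := by
    intro c
    constructor
    · intro h t ht
      have h2 := h t (by omega)
      rw [hcount c t (by omega)] at h2
      have h3 : (t : ℤ) ≤ ∑ j ∈ range t, (a ((j : ZMod (n+1)) + c) : ℤ) := by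
        exact_mod_cast h2
      push_cast
      linarith
    · intro h i hi
      have h2 := h i (by omega)
      push_cast at h2
      have h3 : (i : ℤ) ≤ ∑ j ∈ range i, (a ((j : ZMod (n+1)) + c) : ℤ) := by linarith
      have h4 : (i : ℕ) ≤ ∑ j ∈ range i, a ((j : ZMod (n+1)) + c) := by exact_mod_cast h3
      rw [hcount c i (by omega)]
      exact h4
  have step : (univ.filter fun c : ZMod (n+1) => PFZ n (fun j => u j + c)).card
      = (univ.filter fun c : ZMod (n+1) => ∀ t < n+1,
          (t : ℤ) + 1 - ((1:ℕ):ℤ) ≤ ∑ j ∈ range t, (a ((j : ZMod (n+1)) + c) : ℤ)).card := by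
    rw [← card_filter_neg (fun c : ZMod (n+1) => PFZ n (fun j => u j + c))]
    congr 1
    apply Finset.filter_congr
    intro c _
    simp only [key c]
  rw [step, cycle_lemma (n+1) 1 le_rfl (by omega) a ha]


/-- number of entries equal to the first entry -/
def zstat (n : ℕ) [NeZero n] (w : Fin n → ZMod (n+1)) : ℕ :=
  (univ.filter fun i => w i = w 0).card

lemma zstat_shift (n : ℕ) [NeZero n] (w : Fin n → ZMod (n+1)) (c : ZMod (n+1)) :
    zstat n (fun j => w j + c) = zstat n w := by
  unfold zstat
  congr 1
  ext i
  simp only [mem_filter, mem_univ, true_and, add_left_inj]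

lemma count_B1 (n : ℕ) [NeZero n] (k : ℕ) (w : Fin n → ZMod (n+1)) :
    (univ.filter fun c : ZMod (n+1) =>
        PFZ n (fun j => w j + c) ∧ zstat n (fun j => w j + c) = k).card
      = if zstat n w = k then 1 else 0 := by
  have hn : 1 ≤ n := Nat.one_le_iff_ne_zero.2 (NeZero.ne n)
  by_cases h : zstat n w = k
  · rw [if_pos h]
    have heq : (univ.filter fun c : ZMod (n+1) =>
        PFZ n (fun j => w j + c) ∧ zstat n (fun j => w j + c) = k)
        = (univ.filter fun c : ZMod (n+1) => PFZ n (fun j => w j + c)) :=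
      Finset.filter_congr (fun c _ => by simp [zstat_shift n w c, h])
    rw [heq, pollak n hn w]
  · rw [if_neg h]
    rw [Finset.card_eq_zero, Finset.filter_eq_empty_iff]
    intro c _
    rw [zstat_shift n w c]
    tauto

lemma count_B3 (n : ℕ) [NeZero n] (k : ℕ) (w : Fin n → ZMod (n+1)) :
    (univ.filter fun c : ZMod (n+1) =>
        w 0 + c = 0 ∧ (univ.filter fun i => w i + c = 0).card = k).card
      = if zstat n w = k then 1 else 0 := by
  have hiff : ∀ c : ZMod (n+1),
      (w 0 + c = 0 ∧ (univ.filter fun i => w i + c = 0).card = k)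
        ↔ (c = -w 0 ∧ zstat n w = k) := by
    intro c
    constructor
    · rintro ⟨h1, h2⟩
      have hc : c = -w 0 := eq_neg_of_add_eq_zero_right h1
      subst hc
      refine ⟨rfl, ?_⟩
      rw [← h2]
      unfold zstat
      congr 1
      ext i
      simp only [mem_filter, mem_univ, true_and, ← sub_eq_add_neg, sub_eq_zero]
    · rintro ⟨h1, h2⟩
      subst h1
      refine ⟨by ring, ?_⟩
      rw [← h2]
      unfold zstat
      congr 1
      ext i
      simp only [mem_filter, mem_univ, true_and, ← sub_eq_add_neg, sub_eq_zero]
  rw [Finset.filter_congr (fun c _ => by rw [hiff c])]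
  by_cases h : zstat n w = k
  · rw [if_pos h]
    have : (univ.filter fun c : ZMod (n+1) => c = -w 0 ∧ zstat n w = k)
        = {-w 0} := by
      ext c
      simp [h]
    rw [this, Finset.card_singleton]
  · rw [if_neg h]
    rw [Finset.card_eq_zero, Finset.filter_eq_empty_iff]
    tauto

lemma B_main (n : ℕ) [NeZero n] (k : ℕ) :
    (univ.filter fun w : Fin n → ZMod (n+1) => PFZ n w ∧ zstat n w = k).card
      = (univ.filter fun u : Fin n → ZMod (n+1) =>
          u 0 = 0 ∧ (univ.filter fun i => u i = 0).card = k).card := by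
  have e1 := double_count (ι := Fin n) (G := ZMod (n+1))
    (fun w => PFZ n w ∧ zstat n w = k)
  have e2 := double_count (ι := Fin n) (G := ZMod (n+1))
    (fun u => u 0 = 0 ∧ (univ.filter fun i => u i = 0).card = k)
  have h1 : ∑ w : Fin n → ZMod (n+1), (univ.filter fun c : ZMod (n+1) =>
      PFZ n (fun j => w j + c) ∧ zstat n (fun j => w j + c) = k).card
      = ∑ w : Fin n → ZMod (n+1), if zstat n w = k then 1 else 0 :=
    Finset.sum_congr rfl (fun w _ => count_B1 n k w)
  have h2 : ∑ w : Fin n → ZMod (n+1), (univ.filter fun c : ZMod (n+1) =>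
      w 0 + c = 0 ∧ (univ.filter fun i => w i + c = 0).card = k).card
      = ∑ w : Fin n → ZMod (n+1), if zstat n w = k then 1 else 0 :=
    Finset.sum_congr rfl (fun w _ => count_B3 n k w)
  rw [h1] at e1
  rw [h2] at e2
  have := e1.symm.trans e2
  have hpos : 0 < Fintype.card (ZMod (n+1)) := Fintype.card_pos
  exact Nat.eq_of_mul_eq_mul_left hpos this


/-- shifted parking condition for the non-one entries, `P` the positions of ones -/
def GoodP (n k : ℕ) (P : Finset (Fin n)) (τ : {x : Fin n // x ∉ P} → ZMod n) : Prop :=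
  ∀ i ≤ n, i ≤ k + (univ.filter fun j => (τ j).val + 2 ≤ i).card

instance (n k : ℕ) (P : Finset (Fin n)) (τ : {x : Fin n // x ∉ P} → ZMod n) :
    Decidable (GoodP n k P τ) := Nat.decidableBallLE n _

lemma card_compl_subtype (n : ℕ) (P : Finset (Fin n)) :
    Fintype.card {x : Fin n // x ∉ P} = n - P.card := by
  have h1 : Fintype.card {x : Fin n // x ∉ P}
      = Fintype.card (Fin n) - Fintype.card {x : Fin n // x ∈ P} :=
    Fintype.card_subtype_compl _
  rw [h1, Fintype.card_fin, Fintype.card_coe]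

lemma C_rot (n : ℕ) [NeZero n] (k : ℕ) (hk : 1 ≤ k) (hkn : k ≤ n)
    (P : Finset (Fin n)) (hP : P.card = k) (τ : {x : Fin n // x ∉ P} → ZMod n) :
    (univ.filter fun c : ZMod n => GoodP n k P (fun j => τ j + c)).card = k := by
  set a : ZMod n → ℕ := fun v => (univ.filter fun j => τ j = v).card with haa
  have ha : ∑ v, a v = n - k := by
    rw [sum_mult, card_compl_subtype, hP]
  have hcount : ∀ (c : ZMod n) (i : ℕ), i ≤ n →
      (univ.filter fun j => (τ j + -c).val + 2 ≤ i).card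
        = ∑ t ∈ range (i-1), a ((t : ZMod n) + c) := by
    intro c i hi
    have h1 : (univ.filter fun j => (τ j + -c).val + 2 ≤ i)
        = (univ.filter fun j => (τ j + -c).val < i - 1) :=
      Finset.filter_congr (fun j _ => by omega)
    rw [h1, card_val_lt (fun j => τ j + -c) (i-1) (by omega)]
    apply Finset.sum_congr rfl
    intro t ht
    simp only [haa]
    congr 1
    ext j
    simp only [mem_filter, mem_univ, true_and]
    rw [← sub_eq_add_neg, sub_eq_iff_eq_add]
  have key : ∀ c : ZMod n, GoodP n k P (fun j => τ j + -c) ↔ (∀ t < n,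
      (t : ℤ) + 1 - (k:ℤ) ≤ ∑ j ∈ range t, (a ((j : ZMod n) + c) : ℤ)) := by
    intro c
    constructor
    · intro h t ht
      have h2 := h (t+1) (by omega)
      rw [hcount c (t+1) (by omega)] at h2
      simp only [Nat.add_sub_cancel] at h2
      have h3 : ((t:ℕ) + 1 : ℤ) ≤ (k : ℤ) + ∑ j ∈ range t, (a ((j : ZMod n) + c) : ℤ) := by
        exact_mod_cast h2
      linarith
    · intro h i hi
      rcases Nat.eq_zero_or_pos i with h0 | h0
      · omega
      have h2 := h (i-1) (by omega)
      rw [hcount c i hi]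
      have h3 : ((i:ℤ) - 1) + 1 - (k:ℤ) ≤ ∑ j ∈ range (i-1), (a ((j : ZMod n) + c) : ℤ) := by
        have : ((i - 1 : ℕ) : ℤ) = (i : ℤ) - 1 := by omega
        rw [← this]
        exact_mod_cast h2
      have h4 : (i:ℤ) ≤ (k:ℤ) + ∑ j ∈ range (i-1), (a ((j : ZMod n) + c) : ℤ) := by linarith
      exact_mod_cast h4
  have step : (univ.filter fun c : ZMod n => GoodP n k P (fun j => τ j + c)).card
      = (univ.filter fun c : ZMod n => ∀ t < n,
          (t : ℤ) + 1 - (k:ℤ) ≤ ∑ j ∈ range t, (a ((j : ZMod n) + c) : ℤ)).card := by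
    rw [← card_filter_neg (fun c : ZMod n => GoodP n k P (fun j => τ j + c))]
    congr 1
    apply Finset.filter_congr
    intro c _
    simp only [key c]
  rw [step, cycle_lemma n k hk hkn a ha]

lemma C_count (n : ℕ) [NeZero n] (k : ℕ) (hk : 1 ≤ k) (hkn : k ≤ n)
    (P : Finset (Fin n)) (hP : P.card = k) :
    n * (univ.filter (GoodP n k P)).card = k * n ^ (n - k) := by
  have e := double_count (ι := {x : Fin n // x ∉ P}) (G := ZMod n) (GoodP n k P)
  have h1 : ∑ τ : {x : Fin n // x ∉ P} → ZMod n,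
      (univ.filter fun c : ZMod n => GoodP n k P (fun j => τ j + c)).card
      = ∑ τ : {x : Fin n // x ∉ P} → ZMod n, k :=
    Finset.sum_congr rfl (fun τ _ => C_rot n k hk hkn P hP τ)
  rw [h1, Finset.sum_const, card_univ, smul_eq_mul] at e
  have hcards : Fintype.card ({x : Fin n // x ∉ P} → ZMod n) = n ^ (n - k) := by
    rw [Fintype.card_fun, ZMod.card, card_compl_subtype, hP]
  have hzc : Fintype.card (ZMod n) = n := ZMod.card n
  rw [hcards, hzc] at e
  rw [← e]
  ring


lemma card_subtype_filter {α : Type*} [Fintype α] [DecidableEq α]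
    (p : α → Prop) [DecidablePred p] (q : α → Prop) [DecidablePred q] :
    (univ.filter fun j : {x : α // p x} => q j.1).card
      = (univ.filter fun x : α => p x ∧ q x).card := by
  apply Finset.card_bij (fun j _ => j.1)
  · intro j hj
    simp only [mem_filter, mem_univ, true_and] at *
    exact ⟨j.2, hj⟩
  · intro j1 h1 j2 h2 h
    exact Subtype.ext h
  · intro x hx
    simp only [mem_filter, mem_univ, true_and] at hx
    exact ⟨⟨x, hx.1⟩, by simp only [mem_filter, mem_univ, true_and]; exact hx.2, rfl⟩

lemma good_bound (n k : ℕ) [NeZero n] (hkn : k ≤ n) (P : Finset (Fin n)) (hP : P.card = k)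
    (τ : {x : Fin n // x ∉ P} → ZMod n) (h : GoodP n k P τ) :
    ∀ j, (τ j).val + 2 ≤ n := by
  have h2 := h n le_rfl
  have h3 : Fintype.card {x : Fin n // x ∉ P} = n - k := by
    rw [card_compl_subtype, hP]
  have hcard : (univ.filter fun j => (τ j).val + 2 ≤ n).card
      ≤ (univ : Finset {x : Fin n // x ∉ P}).card := Finset.card_filter_le _ _
  rw [card_univ, h3] at hcard
  have heq : (univ.filter fun j => (τ j).val + 2 ≤ n)
      = (univ : Finset {x : Fin n // x ∉ P}) := by
    apply Finset.eq_univ_of_card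
    rw [h3]
    omega
  intro j
  have hj : j ∈ univ.filter fun j => (τ j).val + 2 ≤ n := by
    rw [heq]; exact Finset.mem_univ j
  exact (Finset.mem_filter.1 hj).2

lemma pf_mem_iff (n : ℕ) (π : Fin n → Fin n) :
    π ∈ pf n n ↔ ∀ i ≤ n, i ≤ (univ.filter fun j => (π j : ℕ) < i).card := by
  unfold pf
  rw [Finset.mem_filter]
  simp only [Finset.mem_univ, true_and]
  have hcong : ∀ i : ℕ, (univ.filter fun j => (π j : ℕ) + 1 ≤ i)
      = (univ.filter fun j => (π j : ℕ) < i) :=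
    fun i => Finset.filter_congr (fun j _ => by omega)
  constructor
  · intro h i hi
    have h2 := h i hi
    rw [hcong i] at h2
    omega
  · intro h i hi
    have h2 := h i hi
    rw [hcong i]
    omega

lemma split_count (n : ℕ) [NeZero n] (P : Finset (Fin n)) (π : Fin n → Fin n)
    (hz : univ.filter (fun i => (π i : ℕ) = 0) = P) (i : ℕ) (hi : 1 ≤ i) :
    (univ.filter fun j => (π j : ℕ) < i).card
      = P.card + (univ.filter fun j : {x : Fin n // x ∉ P} => (π j.1 : ℕ) < i).card := by
  have hmem : ∀ x : Fin n, x ∈ P ↔ (π x : ℕ) = 0 := by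
    intro x
    rw [← hz]
    simp
  rw [card_subtype_filter (fun x => x ∉ P) (fun x => (π x : ℕ) < i)]
  have key := Finset.card_filter_add_card_filter_not
    (s := (univ : Finset (Fin n)).filter fun j => (π j : ℕ) < i) (p := fun x => x ∈ P)
  have hA : ((univ.filter fun j : Fin n => (π j : ℕ) < i).filter fun x => x ∈ P) = P := by
    ext x
    simp only [Finset.mem_filter, Finset.mem_univ, true_and]
    constructor
    · rintro ⟨h1, h2⟩; exact h2
    · intro h2
      refine ⟨?_, h2⟩
      have := (hmem x).1 h2
      omega
  have hB : ((univ.filter fun j : Fin n => (π j : ℕ) < i).filter fun x => ¬(x ∈ P))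
      = (univ.filter fun x : Fin n => ¬(x ∈ P) ∧ (π x : ℕ) < i) := by
    rw [Finset.filter_filter]
    apply Finset.filter_congr
    intro x _
    tauto
  rw [hA, hB] at key
  omega

def phiMap (n : ℕ) (P : Finset (Fin n)) (π : Fin n → Fin n)
    (j : {x : Fin n // x ∉ P}) : ZMod n :=
  (((π j.1 : ℕ) - 1 : ℕ) : ZMod n)

def psiMap (n : ℕ) [NeZero n] (P : Finset (Fin n)) (τ : {x : Fin n // x ∉ P} → ZMod n)
    (x : Fin n) : Fin n :=
  if hx : x ∈ P then 0
  else ⟨((τ ⟨x, hx⟩).val + 1) % n, Nat.mod_lt _ (Nat.pos_of_ne_zero (NeZero.ne n))⟩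

lemma psiMap_coe (n : ℕ) [NeZero n] (P : Finset (Fin n)) (τ : {x : Fin n // x ∉ P} → ZMod n)
    (x : Fin n) (hx : x ∉ P) (hb : (τ ⟨x, hx⟩).val + 2 ≤ n) :
    (psiMap n P τ x : ℕ) = (τ ⟨x, hx⟩).val + 1 := by
  rw [psiMap, dif_neg hx]
  simp only [Fin.val_mk]
  exact Nat.mod_eq_of_lt (by omega)

lemma OP_eq (n k : ℕ) [NeZero n] (hk : 1 ≤ k) (hkn : k ≤ n)
    (P : Finset (Fin n)) (hP : P.card = k) :
    ((pf n n).filter fun π => univ.filter (fun i => (π i : ℕ) = 0) = P).card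
      = (univ.filter (GoodP n k P)).card := by
  refine Finset.card_bij' (i := fun π _ => phiMap n P π) (j := fun τ _ => psiMap n P τ)
    ?_ ?_ ?_ ?_
  · -- forward membership
    intro π hπ
    rw [Finset.mem_filter] at hπ ⊢
    obtain ⟨hpf, hz⟩ := hπ
    have hmem : ∀ x : Fin n, x ∈ P ↔ (π x : ℕ) = 0 := by
      intro x; rw [← hz]; simp
    refine ⟨Finset.mem_univ _, ?_⟩
    intro i hi
    rcases Nat.eq_zero_or_pos i with h0 | h0
    · subst h0; exact Nat.zero_le _
    have hpos : ∀ j : {x : Fin n // x ∉ P}, 1 ≤ (π j.1 : ℕ) := by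
      intro j
      have h2 := j.2
      rw [hmem j.1] at h2
      omega
    have hval : ∀ j : {x : Fin n // x ∉ P},
        (phiMap n P π j).val = (π j.1 : ℕ) - 1 := by
      intro j
      apply ZMod.val_cast_of_lt
      have := (π j.1).isLt
      omega
    have hfc : (univ.filter fun j : {x : Fin n // x ∉ P} => (phiMap n P π j).val + 2 ≤ i)
        = (univ.filter fun j : {x : Fin n // x ∉ P} => (π j.1 : ℕ) < i) := by
      apply Finset.filter_congr
      intro j _
      rw [hval j]
      have := hpos j
      constructor
      · intro h; omega
      · intro h; omega
    rw [hfc]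
    have hsplit := split_count n P π hz i h0
    have hpf2 := (pf_mem_iff n π).1 hpf i hi
    omega
  · -- backward membership
    intro τ hτ
    rw [Finset.mem_filter] at hτ
    have hg : GoodP n k P τ := hτ.2
    have hb := good_bound n k hkn P hP τ hg
    rw [Finset.mem_filter]
    have hz : univ.filter (fun x : Fin n => (psiMap n P τ x : ℕ) = 0) = P := by
      ext x
      simp only [Finset.mem_filter, Finset.mem_univ, true_and]
      by_cases hx : x ∈ P
      · simp [psiMap, dif_pos hx, hx]
      · simp only [hx, iff_false]
        rw [psiMap_coe n P τ x hx (hb _)]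
        omega
    refine ⟨?_, hz⟩
    rw [pf_mem_iff]
    intro i hi
    rcases Nat.eq_zero_or_pos i with h0 | h0
    · subst h0; exact Nat.zero_le _
    have hsplit := split_count n P _ hz i h0
    rw [hsplit, hP]
    have hg2 := hg i hi
    have hfc : (univ.filter fun j : {x : Fin n // x ∉ P} => (psiMap n P τ j.1 : ℕ) < i)
        = (univ.filter fun j : {x : Fin n // x ∉ P} => (τ j).val + 2 ≤ i) := by
      apply Finset.filter_congr
      intro j _
      rw [psiMap_coe n P τ j.1 j.2 (by rw [Subtype.coe_eta]; exact hb j)]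
      rw [Subtype.coe_eta]
      constructor
      · intro h; omega
      · intro h; omega
    rw [hfc]
    omega
  · -- left inverse
    intro π hπ
    rw [Finset.mem_filter] at hπ
    obtain ⟨hpf, hz⟩ := hπ
    have hmem : ∀ x : Fin n, x ∈ P ↔ (π x : ℕ) = 0 := by
      intro x; rw [← hz]; simp
    funext x
    show psiMap n P (phiMap n P π) x = π x
    by_cases hx : x ∈ P
    · rw [show psiMap n P (phiMap n P π) x = 0 from dif_pos hx]
      have := (hmem x).1 hx
      apply Fin.ext
      simp only [Fin.val_zero]
      omega
    · have hpos : 1 ≤ (π x : ℕ) := by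
        have h2 := hx
        rw [hmem x] at h2
        omega
      have hval : (phiMap n P π ⟨x, hx⟩).val = (π x : ℕ) - 1 := by
        apply ZMod.val_cast_of_lt
        have := (π x).isLt
        omega
      apply Fin.ext
      rw [psiMap_coe n P (phiMap n P π) x hx (by rw [hval]; have := (π x).isLt; omega)]
      rw [hval]
      omega
  · -- right inverse
    intro τ hτ
    rw [Finset.mem_filter] at hτ
    have hg : GoodP n k P τ := hτ.2
    have hb := good_bound n k hkn P hP τ hg
    funext j
    have hj : j.1 ∉ P := j.2
    show (((psiMap n P τ j.1 : ℕ) - 1 : ℕ) : ZMod n) = τ j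
    rw [psiMap_coe n P τ j.1 hj (by rw [Subtype.coe_eta]; exact hb j)]
    rw [Subtype.coe_eta]
    simp only [Nat.add_sub_cancel]
    exact ZMod.natCast_rightInverse _


lemma filter_mem_eq (n : ℕ) (Q : Finset (Fin n)) :
    (univ.filter fun i : Fin n => i ∈ Q) = Q := by
  ext i; simp

lemma card_fixed_zeroset (n : ℕ) [NeZero n] (Q : Finset (Fin n)) :
    (univ.filter fun u : Fin n → ZMod (n+1) => univ.filter (fun i => u i = 0) = Q).card
      = n ^ (n - Q.card) := by
  have hset : (univ.filter fun u : Fin n → ZMod (n+1) => univ.filter (fun i => u i = 0) = Q)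
      = Fintype.piFinset (fun i => if i ∈ Q then ({0} : Finset (ZMod (n+1)))
          else Finset.univ.erase 0) := by
    ext u
    rw [Finset.mem_filter, Fintype.mem_piFinset]
    simp only [Finset.mem_univ, true_and]
    constructor
    · intro h i
      by_cases hi : i ∈ Q
      · rw [if_pos hi, Finset.mem_singleton]
        rw [← h] at hi
        exact (Finset.mem_filter.1 hi).2
      · rw [if_neg hi, Finset.mem_erase]
        refine ⟨?_, Finset.mem_univ _⟩
        intro hu
        apply hi
        rw [← h, Finset.mem_filter]
        exact ⟨Finset.mem_univ _, hu⟩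
    · intro h
      ext i
      rw [Finset.mem_filter]
      simp only [Finset.mem_univ, true_and]
      have hi := h i
      by_cases hq : i ∈ Q
      · rw [if_pos hq, Finset.mem_singleton] at hi
        simp [hi, hq]
      · rw [if_neg hq, Finset.mem_erase] at hi
        simp [hi.1, hq]
  rw [hset, Fintype.card_piFinset]
  have hcards : ∀ i : Fin n, ((if i ∈ Q then ({0} : Finset (ZMod (n+1)))
      else Finset.univ.erase 0)).card = if i ∈ Q then 1 else n := by
    intro i
    by_cases hi : i ∈ Q
    · rw [if_pos hi, if_pos hi, Finset.card_singleton]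
    · rw [if_neg hi, if_neg hi, Finset.card_erase_of_mem (Finset.mem_univ _), card_univ]
      rw [ZMod.card]
      omega
  rw [Finset.prod_congr rfl (fun i _ => hcards i), Finset.prod_ite]
  rw [Finset.prod_const, Finset.prod_const, one_pow, one_mul]
  congr 1
  have key := Finset.card_filter_add_card_filter_not
    (s := (univ : Finset (Fin n))) (p := fun i => i ∈ Q)
  rw [filter_mem_eq, card_univ, Fintype.card_fin] at key
  omega

lemma card_powerset_mem (n k : ℕ) [NeZero n] (hk : 1 ≤ k) :
    (((univ : Finset (Fin n)).powersetCard k).filter (fun Q => (0 : Fin n) ∈ Q)).card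
      = (n-1).choose (k-1) := by
  have htarget : (((univ : Finset (Fin n)).erase 0).powersetCard (k-1)).card
      = (n-1).choose (k-1) := by
    rw [Finset.card_powersetCard, Finset.card_erase_of_mem (Finset.mem_univ _), card_univ,
      Fintype.card_fin]
  rw [← htarget]
  refine Finset.card_bij' (i := fun Q _ => Q.erase 0) (j := fun R _ => insert (0 : Fin n) R)
    ?_ ?_ ?_ ?_
  · intro Q hQ
    rw [Finset.mem_filter, Finset.mem_powersetCard] at hQ
    rw [Finset.mem_powersetCard]
    refine ⟨Finset.erase_subset_erase _ hQ.1.1, ?_⟩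
    rw [Finset.card_erase_of_mem hQ.2, hQ.1.2]
  · intro R hR
    rw [Finset.mem_powersetCard] at hR
    have h0 : (0 : Fin n) ∉ R := by
      intro h
      have := hR.1 h
      rw [Finset.mem_erase] at this
      exact this.1 rfl
    rw [Finset.mem_filter, Finset.mem_powersetCard]
    refine ⟨⟨Finset.subset_univ _, ?_⟩, Finset.mem_insert_self _ _⟩
    rw [Finset.card_insert_of_notMem h0, hR.2]
    omega
  · intro Q hQ
    rw [Finset.mem_filter] at hQ
    exact Finset.insert_erase hQ.2
  · intro R hR
    rw [Finset.mem_powersetCard] at hR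
    have h0 : (0 : Fin n) ∉ R := by
      intro h
      have := hR.1 h
      rw [Finset.mem_erase] at this
      exact this.1 rfl
    exact Finset.erase_insert h0

lemma MS_card (n k : ℕ) [NeZero n] (hk : 1 ≤ k) (hkn : k ≤ n) :
    (univ.filter fun u : Fin n → ZMod (n+1) =>
        u 0 = 0 ∧ (univ.filter fun i => u i = 0).card = k).card
      = (n-1).choose (k-1) * n ^ (n - k) := by
  rw [Finset.card_eq_sum_card_fiberwise
    (f := fun u : Fin n → ZMod (n+1) => univ.filter (fun i => u i = 0))
    (t := (univ : Finset (Fin n)).powersetCard k)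
    (fun u hu => by
      rw [Finset.mem_coe, Finset.mem_powersetCard]
      exact ⟨Finset.subset_univ _, (Finset.mem_filter.1 hu).2.2⟩)]
  have hfib : ∀ Q ∈ (univ : Finset (Fin n)).powersetCard k,
      ((univ.filter fun u : Fin n → ZMod (n+1) =>
          u 0 = 0 ∧ (univ.filter fun i => u i = 0).card = k).filter
        (fun u => univ.filter (fun i => u i = 0) = Q)).card
      = if (0 : Fin n) ∈ Q then n ^ (n - k) else 0 := by
    intro Q hQ
    rw [Finset.mem_powersetCard] at hQ
    by_cases h0 : (0 : Fin n) ∈ Q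
    · rw [if_pos h0]
      have heq : ((univ.filter fun u : Fin n → ZMod (n+1) =>
          u 0 = 0 ∧ (univ.filter fun i => u i = 0).card = k).filter
            (fun u => univ.filter (fun i => u i = 0) = Q))
          = univ.filter (fun u : Fin n → ZMod (n+1) => univ.filter (fun i => u i = 0) = Q) := by
        rw [Finset.filter_filter]
        apply Finset.filter_congr
        intro u _
        constructor
        · rintro ⟨h1, h2⟩; exact h2
        · intro h2
          refine ⟨⟨?_, ?_⟩, h2⟩
          · have : (0 : Fin n) ∈ univ.filter (fun i => u i = 0) := by rw [h2]; exact h0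
            exact (Finset.mem_filter.1 this).2
          · rw [h2, hQ.2]
      rw [heq, card_fixed_zeroset, hQ.2]
    · rw [if_neg h0]
      rw [Finset.card_eq_zero, Finset.filter_eq_empty_iff]
      intro u hu
      rw [Finset.mem_filter] at hu
      intro h2
      apply h0
      rw [← h2, Finset.mem_filter]
      exact ⟨Finset.mem_univ _, hu.2.1⟩
  rw [Finset.sum_congr rfl hfib, Finset.sum_ite, Finset.sum_const, Finset.sum_const,
    smul_eq_mul, smul_eq_mul, mul_zero, add_zero, card_powerset_mem n k hk]

lemma L_transfer (n : ℕ) [NeZero n] (k : ℕ) (h0 : 0 < n) :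
    ((pf n n).filter (fun π =>
        (Finset.univ.filter (fun i => π i = π ⟨0, h0⟩)).card = k)).card
      = (univ.filter fun w : Fin n → ZMod (n+1) => PFZ n w ∧ zstat n w = k).card := by
  have hzero : (⟨0, h0⟩ : Fin n) = 0 := by
    apply Fin.ext
    simp
  have hcast : ∀ x y : Fin n, ((x : ℕ) : ZMod (n+1)) = ((y : ℕ) : ZMod (n+1)) ↔ x = y := by
    intro x y
    constructor
    · intro h
      have hx := ZMod.val_cast_of_lt (show (x:ℕ) < n+1 by omega)
      have hy := ZMod.val_cast_of_lt (show (y:ℕ) < n+1 by omega)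
      apply Fin.ext
      rw [← hx, ← hy, h]
    · intro h; rw [h]
  apply Finset.card_bij (fun π _ => fun j : Fin n => ((π j : ℕ) : ZMod (n+1)))
  · intro π hπ
    rw [Finset.mem_filter] at hπ
    obtain ⟨hpf, hstat⟩ := hπ
    rw [Finset.mem_filter]
    refine ⟨Finset.mem_univ _, ?_, ?_⟩
    · intro i hi
      have hval : ∀ j : Fin n, (((π j : ℕ) : ZMod (n+1))).val = (π j : ℕ) :=
        fun j => ZMod.val_cast_of_lt (by omega)
      have hfc : (univ.filter fun j : Fin n => (((π j : ℕ) : ZMod (n+1))).val < i)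
          = univ.filter fun j : Fin n => (π j : ℕ) < i := by
        apply Finset.filter_congr
        intro j _
        rw [hval j]
      rw [hfc]
      exact (pf_mem_iff n π).1 hpf i hi
    · rw [← hstat]
      unfold zstat
      congr 1
      ext i
      simp only [Finset.mem_filter, Finset.mem_univ, true_and]
      rw [hzero, hcast]
  · intro π1 h1 π2 h2 h
    funext j
    have := congrFun h j
    rw [hcast] at this
    exact this
  · intro w hw
    rw [Finset.mem_filter] at hw
    obtain ⟨-, hpfz, hstat⟩ := hw
    have hlt : ∀ j : Fin n, (w j).val < n := by
      have h2 := hpfz n le_rfl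
      have hcard : (univ.filter fun j : Fin n => (w j).val < n).card
          ≤ (univ : Finset (Fin n)).card := Finset.card_filter_le _ _
      rw [card_univ, Fintype.card_fin] at hcard
      have heq : (univ.filter fun j : Fin n => (w j).val < n) = univ := by
        apply Finset.eq_univ_of_card
        rw [Fintype.card_fin]
        omega
      intro j
      have hj : j ∈ univ.filter fun j : Fin n => (w j).val < n := by
        rw [heq]; exact Finset.mem_univ j
      exact (Finset.mem_filter.1 hj).2
    refine ⟨fun j => ⟨(w j).val, hlt j⟩, ?_, ?_⟩
    · rw [Finset.mem_filter]
      constructor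
      · rw [pf_mem_iff]
        intro i hi
        have h2 := hpfz i hi
        have hfc : (univ.filter fun j : Fin n => ((⟨(w j).val, hlt j⟩ : Fin n) : ℕ) < i)
            = univ.filter fun j : Fin n => (w j).val < i := by
          apply Finset.filter_congr
          intro j _
          simp [Fin.val_mk]
        rw [hfc]
        exact h2
      · rw [← hstat]
        unfold zstat
        congr 1
        ext i
        simp only [Finset.mem_filter, Finset.mem_univ, true_and, hzero]
        constructor
        · intro h
          have : (w i).val = (w 0).val := by
            have := congrArg Fin.val h
            simpa using this
          exact ZMod.val_injective _ this
        · intro h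
          apply Fin.ext
          simp [h]
    · funext j
      simp only [Fin.val_mk]
      exact ZMod.natCast_rightInverse _

end PfAux

open Finset PfAux in
/-- For classical parking functions (`m = n`), the statistic `lel` (number of
entries equal to the first entry) is equidistributed with `ones` (number of
entries equal to `1`, i.e. with `Fin`-value `0`). -/
theorem lel_ones_equidistributed (n : ℕ) (hn : 1 ≤ n) (k : ℕ) :
    ((pf n n).filter (fun π =>
        (Finset.univ.filter (fun i => π i = π ⟨0, by omega⟩)).card = k)).card =
    ((pf n n).filter (fun π =>
        (Finset.univ.filter (fun i => (π i : ℕ) = 0)).card = k)).card := by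
  haveI : NeZero n := ⟨by omega⟩
  rw [L_transfer n k (by omega), B_main n k]
  rcases Nat.eq_zero_or_pos k with hk0 | hk
  · subst hk0
    have hL : (univ.filter fun u : Fin n → ZMod (n+1) =>
        u 0 = 0 ∧ (univ.filter fun i => u i = 0).card = 0).card = 0 := by
      rw [Finset.card_eq_zero, Finset.filter_eq_empty_iff]
      rintro u hu ⟨h1, h2⟩
      have hmem : (0 : Fin n) ∈ univ.filter fun i => u i = 0 :=
        Finset.mem_filter.2 ⟨Finset.mem_univ _, h1⟩
      exact Finset.card_ne_zero_of_mem hmem h2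
    have hR : ((pf n n).filter (fun π =>
        (Finset.univ.filter (fun i => (π i : ℕ) = 0)).card = 0)).card = 0 := by
      rw [Finset.card_eq_zero, Finset.filter_eq_empty_iff]
      intro π hπ hc
      have h1 := (pf_mem_iff n π).1 hπ 1 hn
      have hfc : (univ.filter fun j : Fin n => (π j : ℕ) < 1)
          = univ.filter fun j : Fin n => (π j : ℕ) = 0 :=
        Finset.filter_congr (fun j _ => Nat.lt_one_iff)
      rw [hfc, hc] at h1
      exact Nat.not_succ_le_zero 0 h1
    rw [hL, hR]
  rcases le_or_gt k n with hkn | hkn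
  swap
  · have hL : (univ.filter fun u : Fin n → ZMod (n+1) =>
        u 0 = 0 ∧ (univ.filter fun i => u i = 0).card = k).card = 0 := by
      rw [Finset.card_eq_zero, Finset.filter_eq_empty_iff]
      rintro u hu ⟨h1, h2⟩
      have h3 := Finset.card_filter_le (univ : Finset (Fin n)) (fun i => u i = 0)
      rw [card_univ, Fintype.card_fin] at h3
      omega
    have hR : ((pf n n).filter (fun π =>
        (Finset.univ.filter (fun i => (π i : ℕ) = 0)).card = k)).card = 0 := by
      rw [Finset.card_eq_zero, Finset.filter_eq_empty_iff]
      intro π hπ hc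
      have h3 := Finset.card_filter_le (univ : Finset (Fin n)) (fun i => (π i : ℕ) = 0)
      rw [card_univ, Fintype.card_fin] at h3
      exact Nat.lt_irrefl n (Nat.lt_of_lt_of_le hkn (hc ▸ h3))
    rw [hL, hR]
  · -- main case 1 ≤ k ≤ n
    rw [MS_card n k hk hkn]
    apply Nat.eq_of_mul_eq_mul_left (show 0 < n by omega)
    have hpart : ((pf n n).filter (fun π =>
        (Finset.univ.filter (fun i => (π i : ℕ) = 0)).card = k)).card
        = ∑ P ∈ (univ : Finset (Fin n)).powersetCard k,
            ((pf n n).filter (fun π =>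
              Finset.univ.filter (fun i => (π i : ℕ) = 0) = P)).card := by
      rw [Finset.card_eq_sum_card_fiberwise
        (f := fun π : Fin n → Fin n => Finset.univ.filter (fun i => (π i : ℕ) = 0))
        (t := (univ : Finset (Fin n)).powersetCard k)
        (fun π hπ => by
          rw [Finset.mem_coe, Finset.mem_powersetCard]
          exact ⟨Finset.subset_univ _, (Finset.mem_filter.1 hπ).2⟩)]
      apply Finset.sum_congr rfl
      intro P hP
      rw [Finset.mem_powersetCard] at hP
      congr 1
      rw [Finset.filter_filter]
      apply Finset.filter_congr
      intro π _
      constructor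
      · rintro ⟨h1, h2⟩; exact h2
      · intro h2; exact ⟨by rw [h2, hP.2], h2⟩
    rw [hpart, Finset.mul_sum]
    have hfib : ∀ P ∈ (univ : Finset (Fin n)).powersetCard k,
        n * ((pf n n).filter (fun π =>
          Finset.univ.filter (fun i => (π i : ℕ) = 0) = P)).card = k * n ^ (n - k) := by
      intro P hP
      rw [Finset.mem_powersetCard] at hP
      rw [OP_eq n k hk hkn P hP.2]
      exact C_count n k hk hkn P hP.2
    rw [Finset.sum_congr rfl hfib, Finset.sum_const, Finset.card_powersetCard, card_univ,
      Fintype.card_fin, smul_eq_mul]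
    have hb : n * (n-1).choose (k-1) = n.choose k * k := by
      have h1 := Nat.add_one_mul_choose_eq (n-1) (k-1)
      have h2 : n - 1 + 1 = n := Nat.succ_pred_eq_of_pos (by positivity)
      have h3 : k - 1 + 1 = k := Nat.succ_pred_eq_of_pos hk
      rw [h2, h3] at h1
      exact h1
    rw [← mul_assoc, hb, mul_assoc, mul_comm ((n:ℕ).choose k) _, mul_assoc]
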